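/- Let d ≥ 2 and F = F_{3^{2d}}. There are no a, b, c ∈ F_3 \ {0} and x, y ∈ F with x^{3^d+1} = y^{3^d+1} = 1, x² ≠ 1, y² ≠ 1, x² ≠ y², such that z = a + bx + cy satisfies z^{3^d+1} = 1 together with z² ≠ 1, z² ≠ x², z² ≠ y². -/
import Mathlib


/-- no four coplanar points on θ₀ in the cyclic model of PG(2d−1,3). -/
theorem stmt6 (d : ℕ) (hd : 2 ≤ d) (F : Type) [Field F] [Fintype F]
    (hcard : Fintype.card F = 3 ^ (2 * d)) :
    ¬ ∃ a b c x y : F, (a = 1 ∨ a = -1) ∧ (b = 1 ∨ b = -1) ∧ (c = 1 ∨ c = -1) ∧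
      x ^ (3 ^ d + 1) = 1 ∧ y ^ (3 ^ d + 1) = 1 ∧
      x ^ 2 ≠ 1 ∧ y ^ 2 ≠ 1 ∧ x ^ 2 ≠ y ^ 2 ∧
      (a + b * x + c * y) ^ (3 ^ d + 1) = 1 ∧
      (a + b * x + c * y) ^ 2 ≠ 1 ∧
      (a + b * x + c * y) ^ 2 ≠ x ^ 2 ∧
      (a + b * x + c * y) ^ 2 ≠ y ^ 2 := by
  rintro ⟨a, b, c, x, y, ha, hb, hc, hx1, hy1, hx2, hy2, hxy, hz1, hz2, hzx, hzy⟩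
  haveI : CharP F (ringChar F) := ringChar.charP F
  have hprime : (ringChar F).Prime := CharP.char_is_prime F _
  haveI := Fact.mk hprime
  obtain ⟨n, hn⟩ := FiniteField.card F (ringChar F)
  have hp3 : ringChar F = 3 := by
    have h1 : ringChar F ∣ 3 ^ (2 * d) := by
      rw [← hcard, hn.2]
      exact dvd_pow_self _ n.ne_zero
    have h2 := Nat.Prime.dvd_of_dvd_pow hprime h1
    exact (Nat.prime_dvd_prime_iff_eq hprime Nat.prime_three).mp h2
  haveI hchar : CharP F 3 := hp3 ▸ ringChar.charP F
  haveI : Fact (Nat.Prime 3) := ⟨Nat.prime_three⟩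
  have hodd : Odd (3 ^ d) := Odd.pow (by decide)
  have hfa : ∀ t : F, (t = 1 ∨ t = -1) → t ^ (3 ^ d) = t := by
    rintro t (rfl | rfl)
    · exact one_pow _
    · exact hodd.neg_one_pow
  have hzq : (a + b * x + c * y) ^ (3 ^ d)
      = a + b * x ^ (3 ^ d) + c * y ^ (3 ^ d) := by
    rw [add_pow_char_pow, add_pow_char_pow, mul_pow, mul_pow,
      hfa a ha, hfa b hb, hfa c hc]
  have hx : x ^ (3 ^ d) * x = 1 := by rw [← pow_succ]; exact hx1
  have hy : y ^ (3 ^ d) * y = 1 := by rw [← pow_succ]; exact hy1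
  have hz : (a + b * x + c * y) ^ (3 ^ d) * (a + b * x + c * y) = 1 := by
    rw [← pow_succ]; exact hz1
  rw [hzq] at hz
  have ha2 : a ^ 2 = 1 := by rcases ha with rfl | rfl <;> norm_num
  have hb2 : b ^ 2 = 1 := by rcases hb with rfl | rfl <;> norm_num
  have hc2 : c ^ 2 = 1 := by rcases hc with rfl | rfl <;> norm_num
  have h1 : (a + b * x + c * y) * (a * x * y + b * y + c * x) = x * y := by
    linear_combination x * y * hz - (a + b * x + c * y) * b * y * hx
      - (a + b * x + c * y) * c * x * hy
  have hfac : (x + b * c * y) * ((y + a * c) * (1 + a * b * x)) = 0 := by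
    rcases ha with rfl | rfl <;> rcases hb with rfl | rfl <;>
      rcases hc with rfl | rfl <;> linear_combination h1
  rcases mul_eq_zero.mp hfac with h | h
  · exact hxy (by linear_combination (x - b * c * y) * h + y ^ 2 * c ^ 2 * hb2
      + y ^ 2 * hc2)
  rcases mul_eq_zero.mp h with h | h
  · exact hy2 (by linear_combination (y - a * c) * h + c ^ 2 * ha2 + hc2)
  · exact hx2 (by linear_combination (a * b * x - 1) * h - x ^ 2 * b ^ 2 * ha2
      - x ^ 2 * hb2)
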